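/- The increment of F on the cylinder Δ^{−Q̃}_{c₁c₂...c_n} (the set of points whose first n nega-Q̃-digits equal c₁,...,c_n, which is a closed interval) equals Π_{j=1}^{n} p̃_{c_j,j}; i.e., F evaluated at the right endpoint minus F at the left endpoint equals this product. -/

import Mathlib

open Finset Filter Topology MeasureTheory

noncomputable section

/-- `rowSum p n k = Σ_{i<k} p_{i,n}` (the numbers `β_{k,n}`). -/
def rowSum (p : ℕ → ℕ → ℝ) (n k : ℕ) : ℝ := ∑ i ∈ Finset.range k, p n i

/-- Index flip at even positions: `tw m f n i = f n i` for odd `n`, `f n (m n - i)` for even `n`. -/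
def tw (m : ℕ → ℕ) (f : ℕ → ℕ → ℝ) (n i : ℕ) : ℝ :=
  if Odd n then f n i else f n (m n - i)

/-- Tail value of the (nega-)expansion determined by `f` from position `k+1` on. -/
def negaShift (m : ℕ → ℕ) (f : ℕ → ℕ → ℝ) (d : ℕ → ℕ) (k : ℕ) : ℝ :=
  ∑' j : ℕ, tw m (rowSum f) (k + j + 1) (d (k + j + 1)) *
    ∏ t ∈ Finset.Icc (k + 1) (k + j), tw m f t (d t)

/-- The nega-expansion value: `negaVal m f d = β̃_{d₁,1} + Σ_{k≥2} β̃_{d_k,k} Π_{j<k} f̃_{d_j,j}`. -/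
def negaVal (m : ℕ → ℕ) (f : ℕ → ℕ → ℝ) (d : ℕ → ℕ) : ℝ := negaShift m f d 0

/-- A digit sequence for the alphabet sizes `m`. -/
def ValidDigits (m : ℕ → ℕ) (d : ℕ → ℕ) : Prop := ∀ n, d n ≤ m n

/-- the general term of the series `negaVal`. -/
def Fterm (m : ℕ → ℕ) (p : ℕ → ℕ → ℝ) (d : ℕ → ℕ) (j : ℕ) : ℝ :=
  tw m (rowSum p) (j + 1) (d (j + 1)) * ∏ t ∈ Finset.Ioc 0 j, tw m p t (d t)

lemma negaVal_eq_tsum (m : ℕ → ℕ) (p : ℕ → ℕ → ℝ) (d : ℕ → ℕ) :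
    negaVal m p d = ∑' j, Fterm m p d j := by
  unfold negaVal negaShift Fterm
  simp only [Nat.zero_add, ← Finset.Icc_add_one_left_eq_Ioc]

lemma key (m : ℕ → ℕ) (p : ℕ → ℕ → ℝ)
    (hp1 : ∀ n i, i ≤ m n → p n i ∈ Set.Ioo (-1 : ℝ) 1)
    (hp2 : ∀ n, ∑ i ∈ Finset.range (m n + 1), p n i = 1)
    (hp3 : ∀ n k, 1 ≤ k → k ≤ m n → rowSum p n k ∈ Set.Ioo (0 : ℝ) 1)
    (hp4 : ∀ d, ValidDigits m d →
      Tendsto (fun N => ∏ j ∈ Finset.Icc 1 N, |p j (d j)|) atTop (𝓝 0))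
    (c : ℕ → ℕ) (hc : ValidDigits m c) (n : ℕ) :
    negaVal m p (fun k => if k ≤ n then c k else if Odd k then m k else 0) -
      negaVal m p (fun k => if k ≤ n then c k else if Odd k then 0 else m k) =
      ∏ j ∈ Finset.Ioc 0 n, tw m p j (c j) := by
  classical
  set dT : ℕ → ℕ := fun k => if k ≤ n then c k else if Odd k then m k else 0 with hdT
  set dZ : ℕ → ℕ := fun k => if k ≤ n then c k else if Odd k then 0 else m k with hdZ
  set P : ℝ := ∏ j ∈ Finset.Ioc 0 n, tw m p j (c j) with hP
  -- basic facts
  have hm1 : ∀ k, 1 ≤ m k := by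
    intro k
    by_contra h
    have hm0 : m k = 0 := by omega
    have h2 := hp2 k
    rw [hm0] at h2
    simp [Finset.sum_range_one] at h2
    have := (hp1 k 0 (by omega)).2
    rw [h2] at this
    exact lt_irrefl _ this
  have hrow : ∀ k, rowSum p k (m k) = 1 - p k (m k) := by
    intro k
    have h2 := hp2 k
    rw [Finset.sum_range_succ] at h2
    unfold rowSum
    linarith
  have hpm0 : ∀ k, 0 < p k (m k) := by
    intro k
    have h3 := (hp3 k (m k) (hm1 k) le_rfl).2
    rw [hrow k] at h3; linarith
  have hpm1 : ∀ k, p k (m k) < 1 := by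
    intro k
    have h3 := (hp3 k (m k) (hm1 k) le_rfl).1
    rw [hrow k] at h3; linarith
  -- digit computations
  have hTle : ∀ k, k ≤ n → dT k = c k := fun k hk => by simp [hdT, hk]
  have hZle : ∀ k, k ≤ n → dZ k = c k := fun k hk => by simp [hdZ, hk]
  have hTbig : ∀ k, n < k → tw m (rowSum p) k (dT k) = 1 - p k (m k) := by
    intro k hk
    have hk' : ¬ k ≤ n := by omega
    by_cases ho : Odd k
    · simp only [hdT, tw, if_pos ho, if_neg hk']
      exact hrow k
    · simp only [hdT, tw, if_neg ho, if_neg hk', Nat.sub_zero]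
      exact hrow k
  have hTbig2 : ∀ k, n < k → tw m p k (dT k) = p k (m k) := by
    intro k hk
    have hk' : ¬ k ≤ n := by omega
    by_cases ho : Odd k
    · simp only [hdT, tw, if_pos ho, if_neg hk']
    · simp only [hdT, tw, if_neg ho, if_neg hk', Nat.sub_zero]
  have hZbig : ∀ k, n < k → tw m (rowSum p) k (dZ k) = 0 := by
    intro k hk
    have hk' : ¬ k ≤ n := by omega
    by_cases ho : Odd k
    · simp only [hdZ, tw, if_pos ho, if_neg hk']
      simp [rowSum]
    · simp only [hdZ, tw, if_neg ho, if_neg hk', Nat.sub_self]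
      simp [rowSum]
  -- the telescoping products
  set a : ℕ → ℝ := fun i => ∏ t ∈ Finset.Ioc n (n + i), p t (m t) with ha
  have ha0 : a 0 = 1 := by simp [ha]
  have hapos : ∀ i, 0 < a i := fun i => Finset.prod_pos (fun t _ => hpm0 t)
  have hasucc : ∀ i, a (i + 1) = a i * p (n + i + 1) (m (n + i + 1)) := by
    intro i
    simp only [ha]
    exact Finset.prod_Ioc_succ_top (Nat.le_add_right n i) _
  have hprodT : ∀ i, ∏ t ∈ Finset.Ioc 0 (n + i), tw m p t (dT t) = P * a i := by
    intro i
    rw [← Finset.prod_Ioc_consecutive _ (Nat.zero_le n) (Nat.le_add_right n i)]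
    congr 1
    · refine Finset.prod_congr rfl fun t ht => ?_
      rw [hTle t (Finset.mem_Ioc.mp ht).2]
    · exact Finset.prod_congr rfl fun t ht => hTbig2 t (Finset.mem_Ioc.mp ht).1
  have hFT : ∀ i, Fterm m p dT (i + n) = P * (a i - a (i + 1)) := by
    intro i
    rw [Fterm, Nat.add_comm i n, hTbig (n + i + 1) (by omega), hprodT i, hasucc i]
    ring
  -- the Z-side value
  have hZval : negaVal m p dZ = ∑ j ∈ Finset.range n, Fterm m p dZ j := by
    rw [negaVal_eq_tsum]
    refine tsum_eq_sum fun j hj => ?_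
    have hj' : n ≤ j := by simpa using hj
    rw [Fterm, hZbig (j + 1) (by omega), zero_mul]
  have hsumeq : ∑ j ∈ Finset.range n, Fterm m p dT j
      = ∑ j ∈ Finset.range n, Fterm m p dZ j := by
    refine Finset.sum_congr rfl fun j hj => ?_
    have hj' : j < n := Finset.mem_range.mp hj
    rw [Fterm, Fterm, hTle (j + 1) (by omega), hZle (j + 1) (by omega)]
    congr 1
    refine Finset.prod_congr rfl fun t ht => ?_
    have ht' : t ≤ n := le_trans (Finset.mem_Ioc.mp ht).2 (by omega)
    rw [hTle t ht', hZle t ht']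
  -- main computation of the T-side value
  have hTval : negaVal m p dT = P + ∑ j ∈ Finset.range n, Fterm m p dT j := by
    by_cases hP0 : P = 0
    · rw [negaVal_eq_tsum, hP0, zero_add]
      refine tsum_eq_sum fun j hj => ?_
      have hj' : n ≤ j := by simpa using hj
      have : ∏ t ∈ Finset.Ioc 0 j, tw m p t (dT t) = 0 := by
        rw [← Finset.prod_Ioc_consecutive _ (Nat.zero_le n) hj']
        have h1 : ∏ t ∈ Finset.Ioc 0 n, tw m p t (dT t) = P := by
          refine Finset.prod_congr rfl fun t ht => ?_
          rw [hTle t (Finset.mem_Ioc.mp ht).2]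
        rw [h1, hP0, zero_mul]
      rw [Fterm, this, mul_zero]
    · -- a i → 0
      have haz : Tendsto a atTop (𝓝 0) := by
        set dd : ℕ → ℕ := fun k => if k ≤ n then (if Odd k then c k else m k - c k) else m k
          with hdd
        have hddv : ValidDigits m dd := by
          intro k
          simp only [hdd]
          split_ifs
          · exact hc k
          · exact Nat.sub_le _ _
          · exact le_rfl
        have h4 := (hp4 dd hddv).comp (tendsto_add_atTop_nat n)
        have hkey : ∀ i, ∏ j ∈ Finset.Icc 1 (i + n), |p j (dd j)| = |P| * a i := by
          intro i
          rw [show Finset.Icc 1 (i + n) = Finset.Ioc 0 (i + n) from Finset.Icc_add_one_left_eq_Ioc 0 (i + n), Nat.add_comm i n,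
            ← Finset.prod_Ioc_consecutive _ (Nat.zero_le n) (Nat.le_add_right n i)]
          congr 1
          · rw [← Finset.abs_prod]
            congr 1
            refine Finset.prod_congr rfl fun t ht => ?_
            have ht' : t ≤ n := (Finset.mem_Ioc.mp ht).2
            by_cases ho : Odd t
            · simp only [hdd, tw, if_pos ho, if_pos ht']
            · simp only [hdd, tw, if_neg ho, if_pos ht']
          · refine Finset.prod_congr rfl fun t ht => ?_
            have ht' : ¬ t ≤ n := by
              have := (Finset.mem_Ioc.mp ht).1; omega
            simp only [hdd, if_neg ht']
            exact abs_of_pos (hpm0 t)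
        have h4' : Tendsto (fun i => |P| * a i) atTop (𝓝 0) := by
          refine h4.congr fun i => ?_
          simp only [Function.comp]
          exact hkey i
        have h5 := h4'.const_mul |P|⁻¹
        rw [mul_zero] at h5
        refine h5.congr fun i => ?_
        rw [← mul_assoc, inv_mul_cancel₀ (abs_ne_zero.mpr hP0), one_mul]
      have htel : HasSum (fun i => a i - a (i + 1)) 1 := by
        have hnn : ∀ i, 0 ≤ a i - a (i + 1) := by
          intro i
          have h1 := hapos i
          have h2 := hpm0 (n + i + 1)
          have h3 := hpm1 (n + i + 1)
          rw [hasucc i]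
          nlinarith
        rw [hasSum_iff_tendsto_nat_of_nonneg hnn 1]
        have : ∀ N, ∑ i ∈ Finset.range N, (a i - a (i + 1)) = 1 - a N := by
          intro N
          rw [Finset.sum_range_sub' a N, ha0]
        simp only [this]
        have h6 := haz.const_sub 1
        rw [sub_zero] at h6
        exact h6
      have hshift : HasSum (fun i => Fterm m p dT (i + n)) P := by
        have := htel.mul_left P
        rw [mul_one] at this
        exact HasSum.congr_fun this fun i => hFT i
      have hfull := (hasSum_nat_add_iff n).mp hshift
      rw [negaVal_eq_tsum]
      exact hfull.tsum_eq
  rw [hTval, hZval, hsumeq]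
  ring

/-- the increment of `F` on the cylinder `Δ^{−Q̃}_{c₁…c_n}`
(value at the right endpoint minus value at the left endpoint) equals `Π_{j≤n} p̃_{c_j,j}`. -/
theorem stmt5 (m : ℕ → ℕ) (p : ℕ → ℕ → ℝ)
    (hp1 : ∀ n i, i ≤ m n → p n i ∈ Set.Ioo (-1 : ℝ) 1)
    (hp2 : ∀ n, ∑ i ∈ Finset.range (m n + 1), p n i = 1)
    (hp3 : ∀ n k, 1 ≤ k → k ≤ m n → rowSum p n k ∈ Set.Ioo (0 : ℝ) 1)
    (hp4 : ∀ d, ValidDigits m d →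
      Tendsto (fun N => ∏ j ∈ Finset.Icc 1 N, |p j (d j)|) atTop (𝓝 0))
    (c : ℕ → ℕ) (hc : ValidDigits m c) (n : ℕ) (hn : 1 ≤ n) :
    (if Odd n then
        negaVal m p (fun k => if k ≤ n then c k else if Odd (k - n) then 0 else m k) -
          negaVal m p (fun k => if k ≤ n then c k else if Odd (k - n) then m k else 0)
      else
        negaVal m p (fun k => if k ≤ n then c k else if Odd (k - n) then m k else 0) -
          negaVal m p (fun k => if k ≤ n then c k else if Odd (k - n) then 0 else m k)) =
      ∏ j ∈ Finset.Icc 1 n, tw m p j (c j) := by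
  have hIcc : Finset.Icc 1 n = Finset.Ioc 0 n := Finset.Icc_add_one_left_eq_Ioc 0 n
  have hkey := key m p hp1 hp2 hp3 hp4 c hc n
  rw [hIcc]
  by_cases hodd : Odd n
  · rw [if_pos hodd]
    have e1 : (fun k => if k ≤ n then c k else if Odd (k - n) then 0 else m k)
        = (fun k => if k ≤ n then c k else if Odd k then m k else 0) := by
      funext k
      by_cases hk : k ≤ n
      · simp [hk]
      · have hpar : Odd (k - n) ↔ ¬ Odd k := by
          simp only [Nat.odd_iff] at hodd ⊢
          omega
        simp only [if_neg hk]
        by_cases ho : Odd k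
        · rw [if_neg (by rw [hpar]; exact not_not_intro ho), if_pos ho]
        · rw [if_pos (hpar.mpr ho), if_neg ho]
    have e2 : (fun k => if k ≤ n then c k else if Odd (k - n) then m k else 0)
        = (fun k => if k ≤ n then c k else if Odd k then 0 else m k) := by
      funext k
      by_cases hk : k ≤ n
      · simp [hk]
      · have hpar : Odd (k - n) ↔ ¬ Odd k := by
          simp only [Nat.odd_iff] at hodd ⊢
          omega
        simp only [if_neg hk]
        by_cases ho : Odd k
        · rw [if_neg (by rw [hpar]; exact not_not_intro ho), if_pos ho]
        · rw [if_pos (hpar.mpr ho), if_neg ho]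
    rw [e1, e2]
    exact hkey
  · rw [if_neg hodd]
    have e1 : (fun k => if k ≤ n then c k else if Odd (k - n) then m k else 0)
        = (fun k => if k ≤ n then c k else if Odd k then m k else 0) := by
      funext k
      by_cases hk : k ≤ n
      · simp [hk]
      · have hpar : Odd (k - n) ↔ Odd k := by
          simp only [Nat.odd_iff] at hodd ⊢
          omega
        simp only [if_neg hk, hpar]
    have e2 : (fun k => if k ≤ n then c k else if Odd (k - n) then 0 else m k)
        = (fun k => if k ≤ n then c k else if Odd k then 0 else m k) := by
      funext k
      by_cases hk : k ≤ n
      · simp [hk]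
      · have hpar : Odd (k - n) ↔ Odd k := by
          simp only [Nat.odd_iff] at hodd ⊢
          omega
        simp only [if_neg hk, hpar]
    rw [e1, e2]
    exact hkey
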